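/- arXiv:2410.17522 — 7 statements merged into one kernel-verified Lean document; each statement's English description precedes it below -/
import Mathlib

section
/- For every positive integer n, the central Delannoy number satisfies D_n = ∑_{k=0}^{⌊n/2⌋} C(n,2k) C(2k,k) 3^{n-2k} 2^k, i.e. D_n equals the generalized central trinomial coefficient T_n(3,2). -/
open Finset

-- Lemma 1: ∑_k C(n,k)C(k,j) = C(n,j) 2^(n-j)
lemma aux1 (n j : ℕ) (hj : j ≤ n) :
    ∑ k ∈ range (n + 1), n.choose k * k.choose j = n.choose j * 2 ^ (n - j) := by
  have h1 : ∑ k ∈ range (n + 1), n.choose k * k.choose j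
      = ∑ k ∈ Ico j (n + 1), n.choose k * k.choose j := by
    rw [range_eq_Ico]
    refine (Finset.sum_subset (Finset.Ico_subset_Ico (Nat.zero_le _) le_rfl) ?_).symm
    intro k hk hk'
    have : k < j := by
      simp only [mem_Ico] at hk hk'
      omega
    rw [Nat.choose_eq_zero_of_lt this, Nat.mul_zero]
  rw [h1, Finset.sum_Ico_eq_sum_range]
  have h2 : ∀ i ∈ range (n + 1 - j), n.choose (j + i) * (j + i).choose j
      = n.choose j * (n - j).choose i := by
    intro i hi
    rw [mem_range] at hi
    rw [Nat.choose_mul (n := n) (k := j + i) (s := j) (by omega)]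
    congr 2
    omega
  rw [Finset.sum_congr rfl h2, ← Finset.mul_sum]
  congr 1
  have : n + 1 - j = (n - j) + 1 := by omega
  rw [this, Nat.sum_range_choose]

-- Vandermonde in range form
lemma aux2 (n k : ℕ) : (n + k).choose k = ∑ j ∈ range (k + 1), n.choose j * k.choose j := by
  rw [Nat.add_choose_eq, Finset.Nat.sum_antidiagonal_eq_sum_range_succ_mk]
  refine Finset.sum_congr rfl fun j hj => ?_
  rw [mem_range] at hj
  show n.choose j * k.choose (k - j) = _
  rw [Nat.choose_symm (by omega)]

def D (n : ℕ) : ℕ := ∑ k ∈ Finset.range (n + 1), n.choose k * (n + k).choose k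

-- D n = ∑ C(n,m)^2 * 2^m
lemma auxD (n : ℕ) : D n = ∑ m ∈ range (n + 1), n.choose m ^ 2 * 2 ^ m := by
  have step1 : D n = ∑ j ∈ range (n + 1), n.choose j ^ 2 * 2 ^ (n - j) := by
    unfold D
    have h : ∀ k ∈ range (n + 1), n.choose k * (n + k).choose k
        = ∑ j ∈ range (n + 1), n.choose k * (n.choose j * k.choose j) := by
      intro k hk
      rw [mem_range] at hk
      rw [aux2, Finset.mul_sum]
      refine Finset.sum_subset (Finset.range_subset_range.2 (by omega)) ?_
      intro j hj hj'
      rw [mem_range, not_lt] at hj'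
      rw [Nat.choose_eq_zero_of_lt (by omega : k < j)]
      ring
    rw [Finset.sum_congr rfl h, Finset.sum_comm]
    refine Finset.sum_congr rfl fun j hj => ?_
    rw [mem_range] at hj
    have : ∑ k ∈ range (n + 1), n.choose k * (n.choose j * k.choose j)
        = n.choose j * ∑ k ∈ range (n + 1), n.choose k * k.choose j := by
      rw [Finset.mul_sum]; refine Finset.sum_congr rfl fun k _ => by ring
    rw [this, aux1 n j (by omega)]
    ring
  rw [step1, ← Finset.sum_range_reflect]
  refine Finset.sum_congr rfl fun m hm => ?_
  rw [mem_range] at hm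
  have h1 : n + 1 - 1 - m = n - m := by omega
  rw [h1, Nat.choose_symm (by omega)]
  have h2 : n - (n - m) = m := by omega
  rw [h2]

-- key termwise multinomial identity
lemma auxM (n k i : ℕ) (h : k + i ≤ n) :
    n.choose (k + i) * (k + i).choose i * (n - k - i).choose k
      = n.choose k * (n - k).choose k * (n - 2 * k).choose i := by
  by_cases hcase : 2 * k + i ≤ n
  · have e1 : n.choose (2 * k) * (2 * k).choose k = n.choose k * (n - k).choose k := by
      have := Nat.choose_mul (n := n) (show k ≤ 2 * k by omega)
      rwa [show 2 * k - k = k by omega] at this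
    have e2 : n.choose (2 * k + i) * (2 * k + i).choose (2 * k)
        = n.choose (2 * k) * (n - 2 * k).choose i := by
      have := Nat.choose_mul (n := n) (show 2 * k ≤ 2 * k + i by omega)
      rwa [show 2 * k + i - 2 * k = i by omega] at this
    have e3 : n.choose (2 * k + i) * (2 * k + i).choose (k + i)
        = n.choose (k + i) * (n - k - i).choose k := by
      have := Nat.choose_mul (n := n) (show k + i ≤ 2 * k + i by omega)
      rwa [show 2 * k + i - (k + i) = k by omega, show n - (k + i) = n - k - i by omega] at this
    have e4 : (2 * k + i).choose (k + i) * (k + i).choose i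
        = (2 * k + i).choose i * (2 * k).choose k := by
      have := Nat.choose_mul (n := 2 * k + i) (show i ≤ k + i by omega)
      rwa [show k + i - i = k by omega, show 2 * k + i - i = 2 * k by omega] at this
    have e5 : (2 * k + i).choose i = (2 * k + i).choose (2 * k) := by
      have := Nat.choose_symm (show 2 * k ≤ 2 * k + i by omega)
      rwa [show 2 * k + i - 2 * k = i by omega] at this
    calc n.choose (k + i) * (k + i).choose i * (n - k - i).choose k
        = n.choose (k + i) * (n - k - i).choose k * (k + i).choose i := by ring
      _ = n.choose (2 * k + i) * (2 * k + i).choose (k + i) * (k + i).choose i := by rw [e3]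
      _ = n.choose (2 * k + i) * ((2 * k + i).choose (k + i) * (k + i).choose i) := by ring
      _ = n.choose (2 * k + i) * ((2 * k + i).choose i * (2 * k).choose k) := by rw [e4]
      _ = n.choose (2 * k + i) * ((2 * k + i).choose (2 * k) * (2 * k).choose k) := by rw [e5]
      _ = n.choose (2 * k + i) * (2 * k + i).choose (2 * k) * (2 * k).choose k := by ring
      _ = n.choose (2 * k) * (n - 2 * k).choose i * (2 * k).choose k := by rw [e2]
      _ = n.choose (2 * k) * (2 * k).choose k * (n - 2 * k).choose i := by ring
      _ = n.choose k * (n - k).choose k * (n - 2 * k).choose i := by rw [e1]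
  · have hL : (n - k - i).choose k = 0 := Nat.choose_eq_zero_of_lt (by omega)
    rw [hL, Nat.mul_zero]
    by_cases h2 : 2 * k ≤ n
    · rw [Nat.choose_eq_zero_of_lt (show n - 2 * k < i by omega), Nat.mul_zero]
    · rw [Nat.choose_eq_zero_of_lt (show n - k < k by omega)]
      ring

lemma pow3 (m : ℕ) : ∑ i ∈ range (m + 1), m.choose i * 2 ^ i = 3 ^ m := by
  have h := add_pow 2 1 m (R := ℕ)
  simp only [one_pow, mul_one, Nat.cast_id] at h
  rw [show (3 : ℕ) = 2 + 1 by norm_num, h]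
  refine Finset.sum_congr rfl fun i _ => by ring

-- reindex: the key double-sum transformation
lemma auxS (n : ℕ) :
    ∑ m ∈ range (n + 1), n.choose m ^ 2 * 2 ^ m
      = ∑ k ∈ range (n + 1), ∑ i ∈ range (n + 1 - k),
          n.choose (k + i) * (k + i).choose i * (n - k - i).choose k * 2 ^ (k + i) := by
  have hm : ∀ m ∈ range (n + 1), n.choose m ^ 2 * 2 ^ m
      = ∑ j ∈ range (m + 1),
          n.choose m * m.choose j * (n - m).choose (m - j) * 2 ^ m := by
    intro m hmr
    rw [mem_range] at hmr
    have hv : n.choose m = ∑ j ∈ range (m + 1), m.choose j * (n - m).choose (m - j) := by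
      have h := Nat.add_choose_eq m (n - m) m
      rw [Finset.Nat.sum_antidiagonal_eq_sum_range_succ_mk] at h
      rwa [show m + (n - m) = n by omega] at h
    calc n.choose m ^ 2 * 2 ^ m
        = n.choose m * (∑ j ∈ range (m + 1), m.choose j * (n - m).choose (m - j)) * 2 ^ m := by
          rw [← hv]; ring
      _ = ∑ j ∈ range (m + 1), n.choose m * m.choose j * (n - m).choose (m - j) * 2 ^ m := by
          rw [Finset.mul_sum, Finset.sum_mul]
          exact Finset.sum_congr rfl fun j _ => by ring
  rw [Finset.sum_congr rfl hm, Finset.sum_sigma', Finset.sum_sigma']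
  refine Finset.sum_nbij' (fun p => ⟨p.1 - p.2, p.2⟩) (fun q => ⟨q.1 + q.2, q.2⟩)
    ?_ ?_ ?_ ?_ ?_
  · rintro ⟨m, j⟩ hp
    simp only [Finset.mem_sigma, mem_range] at hp ⊢
    omega
  · rintro ⟨k, i⟩ hq
    simp only [Finset.mem_sigma, mem_range] at hq ⊢
    omega
  · rintro ⟨m, j⟩ hp
    simp only [Finset.mem_sigma, mem_range] at hp
    simp only [Sigma.mk.inj_iff, heq_eq_eq]
    exact ⟨by omega, trivial⟩
  · rintro ⟨k, i⟩ hq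
    simp only [Finset.mem_sigma, mem_range] at hq
    simp only [Sigma.mk.inj_iff, heq_eq_eq]
    exact ⟨by omega, trivial⟩
  · rintro ⟨m, j⟩ hp
    simp only [Finset.mem_sigma, mem_range] at hp
    have h1 : m - j + j = m := by omega
    have h2 : n - (m - j) - j = n - m := by omega
    simp only [h1, h2]

theorem stmt0 (n : ℕ) (hn : 0 < n) :
    D n = ∑ k ∈ Finset.range (n / 2 + 1), n.choose (2 * k) * (2 * k).choose k * 3 ^ (n - 2 * k) * 2 ^ k := by
  rw [auxD, auxS]
  have hstep : ∀ k ∈ range (n + 1),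
      (∑ i ∈ range (n + 1 - k),
        n.choose (k + i) * (k + i).choose i * (n - k - i).choose k * 2 ^ (k + i))
      = n.choose (2 * k) * (2 * k).choose k * 3 ^ (n - 2 * k) * 2 ^ k := by
    intro k hk
    rw [mem_range] at hk
    have h1 : ∀ i ∈ range (n + 1 - k),
        n.choose (k + i) * (k + i).choose i * (n - k - i).choose k * 2 ^ (k + i)
        = n.choose k * (n - k).choose k * 2 ^ k * ((n - 2 * k).choose i * 2 ^ i) := by
      intro i hi
      rw [mem_range] at hi
      rw [auxM n k i (by omega), pow_add]
      ring
    rw [Finset.sum_congr rfl h1, ← Finset.mul_sum]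
    by_cases h2 : 2 * k ≤ n
    · have h3 : ∑ i ∈ range (n + 1 - k), (n - 2 * k).choose i * 2 ^ i
          = ∑ i ∈ range (n - 2 * k + 1), (n - 2 * k).choose i * 2 ^ i := by
        refine (Finset.sum_subset (Finset.range_subset_range.2 (by omega)) ?_).symm
        intro i hi hi'
        rw [mem_range, not_lt] at hi'
        rw [Nat.choose_eq_zero_of_lt (by omega), Nat.zero_mul]
      rw [h3, pow3]
      have e1 : n.choose (2 * k) * (2 * k).choose k = n.choose k * (n - k).choose k := by
        have := Nat.choose_mul (n := n) (show k ≤ 2 * k by omega)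
        rwa [show 2 * k - k = k by omega] at this
      rw [← e1]
      ring
    · rw [Nat.choose_eq_zero_of_lt (show n - k < k by omega),
        Nat.choose_eq_zero_of_lt (show n < 2 * k by omega)]
      ring
  rw [Finset.sum_congr rfl hstep]
  refine (Finset.sum_subset (Finset.range_subset_range.2 (by omega)) ?_).symm
  intro k hk hk'
  rw [mem_range, not_lt] at hk'
  rw [Nat.choose_eq_zero_of_lt (show n < 2 * k by omega)]
  ring
end

section
/- For any odd prime p, the little Schröder numbers satisfy s_p ≡ 2 (mod p) and s_{p+1} ≡ 3 (mod p). -/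
def littleSchroeder (n : ℕ) : ℤ :=
  ∑ k ∈ Finset.Icc 1 n, ((n.choose k * n.choose (k - 1) / n * 2 ^ (n - k) : ℕ) : ℤ)

/-- Narayana integrality: `(m+1) ∣ C(m+1,j+1) * C(m+1,j)`. -/
lemma narayana_dvd (m j : ℕ) (hj : j ≤ m) :
    (m + 1) ∣ (m + 1).choose (j + 1) * (m + 1).choose j := by
  set A := (m + 1).choose (j + 1) * (m + 1).choose j with hA
  have h1 : (m + 1).choose (j + 1) * (j + 1) = (m + 1) * m.choose j := by
    simpa [mul_comm] using (Nat.add_one_mul_choose_eq m j).symm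
  have h2 : (m + 1).choose j * (m + 1 - j) = (m + 1) * m.choose j := by
    rw [← Nat.choose_mul_succ_eq m j]; ring
  have d1 : (m + 1) ∣ A * (j + 1) := by
    refine ⟨m.choose j * (m + 1).choose j, ?_⟩
    rw [hA, mul_right_comm, h1]; ring
  have d2 : (m + 1) ∣ A * (m + 1 - j) := by
    refine ⟨(m + 1).choose (j + 1) * m.choose j, ?_⟩
    rw [hA, mul_assoc, h2]; ring
  have dg : (m + 1) ∣ A * Nat.gcd (j + 1) (m + 1 - j) := by
    rw [← Nat.gcd_mul_left]
    exact Nat.dvd_gcd d1 d2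
  have hsum : (j + 1) + (m + 1 - j) = m + 1 + 1 := by omega
  have hgd : Nat.gcd (j + 1) (m + 1 - j) ∣ m + 1 + 1 := by
    rw [← hsum]
    exact Nat.dvd_add (Nat.gcd_dvd_left _ _) (Nat.gcd_dvd_right _ _)
  have hcop1 : Nat.Coprime (m + 1) (m + 1 + 1) := by simp
  have hcop : Nat.Coprime (m + 1) (Nat.gcd (j + 1) (m + 1 - j)) :=
    Nat.Coprime.coprime_dvd_right hgd hcop1
  exact hcop.dvd_of_dvd_mul_right dg

lemma prime_dvd_choose_succ (p j : ℕ) (hp : p.Prime) (h2 : 2 ≤ j) (hj : j ≤ p - 1) :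
    p ∣ (p + 1).choose j := by
  obtain ⟨j', rfl⟩ : ∃ j', j = j' + 1 := ⟨j - 1, by omega⟩
  rw [Nat.choose_succ_succ]
  have hp2 : 2 ≤ p := hp.two_le
  refine Nat.dvd_add (hp.dvd_choose_self ?_ ?_) (hp.dvd_choose_self ?_ ?_) <;> omega

theorem stmt9 (p : ℕ) (hp : p.Prime) (hp2 : Odd p) :
    littleSchroeder p ≡ 2 [ZMOD p] ∧ littleSchroeder (p + 1) ≡ 3 [ZMOD p] := by
  haveI : Fact p.Prime := ⟨hp⟩
  have hp2' : p ≠ 2 := by rintro rfl; exact (by decide : ¬ Odd 2) hp2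
  have hp3 : 3 ≤ p := by have := hp.two_le; omega
  have hpos : 0 < p := by omega
  have h2ne : (2 : ZMod p) ≠ 0 := by
    have : ((2 : ℕ) : ZMod p) ≠ 0 := by
      rw [Ne, ZMod.natCast_eq_zero_iff]
      intro h
      exact hp2' ((Nat.prime_dvd_prime_iff_eq hp Nat.prime_two).mp h)
    simpa using this
  have fermat : (2 : ZMod p) ^ (p - 1) = 1 := ZMod.pow_card_sub_one_eq_one h2ne
  constructor
  · rw [← ZMod.intCast_eq_intCast_iff]
    unfold littleSchroeder
    rw [Int.cast_sum]
    simp only [Int.cast_natCast, Int.cast_ofNat]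
    have hsub : ({1, p} : Finset ℕ) ⊆ Finset.Icc 1 p := by
      intro x hx
      simp only [Finset.mem_insert, Finset.mem_singleton] at hx
      rcases hx with rfl | rfl <;> simp [Finset.mem_Icc] <;> omega
    have hzero : ∀ x ∈ Finset.Icc 1 p, x ∉ ({1, p} : Finset ℕ) →
        ((p.choose x * p.choose (x - 1) / p * 2 ^ (p - x) : ℕ) : ZMod p) = 0 := by
      intro x hx hnx
      simp only [Finset.mem_Icc] at hx
      simp only [Finset.mem_insert, Finset.mem_singleton, not_or] at hnx
      have hx2 : 2 ≤ x := by omega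
      obtain ⟨a, ha⟩ := hp.dvd_choose_self (show x ≠ 0 by omega) (by omega)
      obtain ⟨b, hb⟩ := hp.dvd_choose_self (show x - 1 ≠ 0 by omega) (by omega)
      have hdiv : p.choose x * p.choose (x - 1) / p = p * (a * b) := by
        rw [ha, hb, show p * a * (p * b) = p * (p * (a * b)) by ring,
          Nat.mul_div_cancel_left _ hpos]
      rw [hdiv, ZMod.natCast_eq_zero_iff]
      exact ⟨a * b * 2 ^ (p - x), by ring⟩
    rw [← Finset.sum_subset hsub hzero]
    rw [Finset.sum_pair (by omega : (1 : ℕ) ≠ p)]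
    have t1 : p.choose 1 * p.choose (1 - 1) / p * 2 ^ (p - 1) = 2 ^ (p - 1) := by
      simp [Nat.choose_one_right, Nat.div_self hpos]
    have t2 : p.choose p * p.choose (p - 1) / p * 2 ^ (p - p) = 1 := by
      have h : p.choose (p - 1) = p := by
        have := Nat.choose_symm (show 1 ≤ p by omega)
        simpa [Nat.choose_one_right] using this
      simp [h, Nat.choose_self, Nat.div_self hpos]
    rw [t1, t2]
    push_cast
    rw [fermat]
    norm_num
  · rw [← ZMod.intCast_eq_intCast_iff]
    unfold littleSchroeder
    rw [Int.cast_sum]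
    simp only [Int.cast_natCast, Int.cast_ofNat]
    have hsub : ({1, p + 1} : Finset ℕ) ⊆ Finset.Icc 1 (p + 1) := by
      intro x hx
      simp only [Finset.mem_insert, Finset.mem_singleton] at hx
      rcases hx with rfl | rfl <;> simp [Finset.mem_Icc] <;> omega
    have hzero : ∀ x ∈ Finset.Icc 1 (p + 1), x ∉ ({1, p + 1} : Finset ℕ) →
        (((p + 1).choose x * (p + 1).choose (x - 1) / (p + 1) * 2 ^ (p + 1 - x) : ℕ) :
          ZMod p) = 0 := by
      intro x hx hnx
      simp only [Finset.mem_Icc] at hx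
      simp only [Finset.mem_insert, Finset.mem_singleton, not_or] at hnx
      have hx2 : 2 ≤ x := by omega
      have hxp : x ≤ p := by omega
      have hnar : (p + 1) ∣ (p + 1).choose x * (p + 1).choose (x - 1) := by
        have := narayana_dvd p (x - 1) (by omega)
        rwa [show x - 1 + 1 = x by omega] at this
      obtain ⟨N, hN⟩ := hnar
      have hdivex : (p + 1).choose x * (p + 1).choose (x - 1) / (p + 1) = N := by
        rw [hN, Nat.mul_div_cancel_left _ (show 0 < p + 1 by omega)]
      have hpA : p ∣ (p + 1).choose x * (p + 1).choose (x - 1) := by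
        rcases Nat.lt_or_ge x p with h | h
        · exact Dvd.dvd.mul_right (prime_dvd_choose_succ p x hp hx2 (by omega)) _
        · have hxeq : x = p := by omega
          rw [hxeq]
          exact Dvd.dvd.mul_left (prime_dvd_choose_succ p (p - 1) hp (by omega) (by omega)) _
      have hpN : p ∣ N := by
        rw [hN] at hpA
        have hcop : Nat.Coprime p (p + 1) := by simp
        exact hcop.dvd_of_dvd_mul_right (by rwa [mul_comm] at hpA)
      rw [hdivex, ZMod.natCast_eq_zero_iff]
      exact Dvd.dvd.mul_right hpN _
    rw [← Finset.sum_subset hsub hzero]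
    rw [Finset.sum_pair (by omega : (1 : ℕ) ≠ p + 1)]
    have t1 : (p + 1).choose 1 * (p + 1).choose (1 - 1) / (p + 1) * 2 ^ (p + 1 - 1)
        = 2 ^ p := by
      simp [Nat.choose_one_right, Nat.div_self (show 0 < p + 1 by omega)]
    have t2 : (p + 1).choose (p + 1) * (p + 1).choose (p + 1 - 1) / (p + 1) *
        2 ^ (p + 1 - (p + 1)) = 1 := by
      have h : (p + 1).choose (p + 1 - 1) = p + 1 := by
        have := Nat.choose_symm (show 1 ≤ p + 1 by omega)
        simpa [Nat.choose_one_right] using this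
      simp [h, Nat.choose_self, Nat.div_self (show 0 < p + 1 by omega)]
    rw [t1, t2]
    have h2p : (2 : ZMod p) ^ p = 2 := by
      have hps : p - 1 + 1 = p := by omega
      calc (2 : ZMod p) ^ p = 2 ^ (p - 1 + 1) := by rw [hps]
        _ = 2 ^ (p - 1) * 2 := pow_succ 2 (p - 1)
        _ = 2 := by rw [fermat, one_mul]
    push_cast
    rw [h2p]
    norm_num
end

section
/- For any natural number j and any integer n > j, ∑_{k=j+1}^n (−1)^{n−k} k (k−j) C(k+j,2j) = (1/(2 C(2j,j))) C(n+j+1,j) C(n−1,j) n (n+1). -/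
theorem stmt12 (j n : ℕ) (hn : j < n) :
    2 * ((2 * j).choose j : ℤ) *
        ∑ k ∈ Finset.Icc (j + 1) n, (-1 : ℤ) ^ (n - k) * k * ((k : ℤ) - j) * ((k + j).choose (2 * j) : ℤ)
      = ((n + j + 1).choose j : ℤ) * ((n - 1).choose j : ℤ) * n * (n + 1) := by
  induction n, hn using Nat.le_induction with
  | base =>
      rw [Finset.Icc_self, Finset.sum_singleton]
      have h1 : (j + 1 + j) = 2 * j + 1 := by ring
      have h2 : (2 * j + 1).choose (2 * j) = 2 * j + 1 := Nat.choose_succ_self_right _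
      have h3 : (2 * j).choose j * (2 * j + 1) = (2 * j + 1).choose j * (j + 1) := by
        have := Nat.choose_mul_succ_eq (2 * j) j
        have e : 2 * j + 1 - j = j + 1 := by omega
        rw [e] at this; exact this
      have h4 : (2 * j + 1).choose j * (2 * j + 2) = (2 * j + 2).choose j * (j + 2) := by
        have := Nat.choose_mul_succ_eq (2 * j + 1) j
        have e : 2 * j + 1 + 1 - j = j + 2 := by omega
        rw [e] at this; linarith [this]
      have e1 : 2 * j + 1 + 1 = 2 * j + 2 := by ring
      simp only [Nat.succ_eq_add_one, Nat.add_sub_cancel, Nat.sub_self]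
      rw [h1, h2, e1, Nat.choose_self]
      have h3' : ((2 * j).choose j : ℤ) * (2 * j + 1) = ((2 * j + 1).choose j : ℤ) * (j + 1) := by
        exact_mod_cast h3
      have h4' : ((2 * j + 1).choose j : ℤ) * (2 * j + 2) = ((2 * j + 2).choose j : ℤ) * (j + 2) := by
        exact_mod_cast h4
      push_cast
      linear_combination 2 * ((j : ℤ) + 1) * h3' + ((j : ℤ) + 1) * h4' 
  | succ n hn ih =>
      have hjn : j ≤ n := le_of_lt hn
      rw [Finset.sum_Icc_succ_top (by omega : j + 1 ≤ n + 1)]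
      have hrw : ∑ k ∈ Finset.Icc (j + 1) n,
          (-1 : ℤ) ^ (n + 1 - k) * k * ((k : ℤ) - j) * ((k + j).choose (2 * j) : ℤ)
          = -∑ k ∈ Finset.Icc (j + 1) n,
          (-1 : ℤ) ^ (n - k) * k * ((k : ℤ) - j) * ((k + j).choose (2 * j) : ℤ) := by
        rw [← Finset.sum_neg_distrib]
        apply Finset.sum_congr rfl
        intro k hk
        simp only [Finset.mem_Icc] at hk
        have : n + 1 - k = (n - k) + 1 := by omega
        rw [this, pow_succ]
        ring
      rw [hrw]
      -- key binomial identities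
      have key : (n + 1 + j).choose (2 * j) * ((2 * j).choose j) =
          (n + 1 + j).choose j * (n + 1).choose j := by
        have := Nat.choose_mul (n := n + 1 + j) (k := 2 * j) (s := j) (by omega)
        have e1 : n + 1 + j - j = n + 1 := by omega
        have e2 : 2 * j - j = j := by omega
        rw [e1, e2] at this; exact this
      have hA : (n).choose j * (n + 1) = (n + 1).choose j * (n + 1 - j) :=
        Nat.choose_mul_succ_eq n j
      have hB : (n - 1).choose j * n = n.choose j * (n - j) := by
        have := Nat.choose_mul_succ_eq (n - 1) j
        have e : n - 1 + 1 = n := by omega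
        rw [e] at this; exact this
      have hC : (n + j + 1).choose j * (n + j + 2) = (n + j + 2).choose j * (n + 2) := by
        have := Nat.choose_mul_succ_eq (n + j + 1) j
        have e : n + j + 1 + 1 - j = n + 2 := by omega
        have e2 : n + j + 1 + 1 = n + j + 2 := by omega
        rw [e, e2] at this; exact this
      -- cast to ℤ
      have key' : ((n + 1 + j).choose (2 * j) : ℤ) * ((2 * j).choose j : ℤ) =
          ((n + 1 + j).choose j : ℤ) * ((n + 1).choose j : ℤ) := by exact_mod_cast key
      have hA' : ((n).choose j : ℤ) * (n + 1) = ((n + 1).choose j : ℤ) * ((n : ℤ) + 1 - j) := by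
        have := congrArg (Nat.cast : ℕ → ℤ) hA
        push_cast [Nat.sub_add_comm hjn] at this ⊢
        rw [this]; congr 1; omega
      have hB' : ((n - 1).choose j : ℤ) * n = (n.choose j : ℤ) * ((n : ℤ) - j) := by
        have := congrArg (Nat.cast : ℕ → ℤ) hB
        push_cast at this
        rw [this]; congr 1; omega
      have hC' : ((n + j + 1).choose j : ℤ) * ((n : ℤ) + j + 2) =
          ((n + j + 2).choose j : ℤ) * ((n : ℤ) + 2) := by exact_mod_cast hC
      have e4 : (n + 1 + j + 1) = n + j + 2 := by omega
      have e5 : (n + 1 + j) = n + j + 1 := by ring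
      simp only [Nat.add_sub_cancel]
      rw [e5] at key'
      rw [e4, e5]
      have hsign : ((-1 : ℤ)) ^ (n + 1 - (n + 1)) = 1 := by norm_num
      rw [hsign]
      push_cast
      linear_combination (-1 : ℤ) * ih + 2 * ((n : ℤ) + 1) * ((n : ℤ) + 1 - j) * key'
        - 2 * ((n : ℤ) + 1) * ((n + j + 1).choose j : ℤ) * hA'
        - ((n + j + 1).choose j : ℤ) * ((n : ℤ) + 1) * hB'
        + (n.choose j : ℤ) * ((n : ℤ) + 1) * hC'
end

section
/- For any natural number j and any integer n > j, ∑_{k=j+1}^n (−1)^{n−k} (4k^2+2k−1) C(k+j,2j) (2j+1 − j(j+1)(2k+1)/(k(k+1))) = (1/C_j) · w(n,j+1) · n · ((4j+2)n + 4j+3), where w(n,k) = (1/k) C(n−1,k−1) C(n+k,k−1) and C_j = C(2j,j)/(j+1) is the Catalan number. -/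
lemma chq (j n : ℕ) (h : j < n) :
    (n.choose j : ℚ) * ((n : ℚ) - j) = ((n - 1).choose j : ℚ) * n := by
  have h1 := Nat.choose_mul_succ_eq (n - 1) j
  rw [show n - 1 + 1 = n from by omega] at h1
  have h2 : ((n : ℚ) - j) = ((n - j : ℕ) : ℚ) := by
    push_cast [Nat.cast_sub h.le]; ring
  rw [h2]
  exact_mod_cast h1.symm

theorem stmt13 (j n : ℕ) (hn : j < n) :
    ∑ k ∈ Finset.Icc (j + 1) n,
        (-1 : ℚ) ^ (n - k) * (4 * k ^ 2 + 2 * k - 1) * ((k + j).choose (2 * j) : ℚ) *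
          (2 * j + 1 - j * (j + 1) * (2 * k + 1) / (k * (k + 1)))
      = (1 / (catalan j : ℚ)) *
          ((1 / ((j : ℚ) + 1)) * ((n - 1).choose j : ℚ) * ((n + j + 1).choose j : ℚ)) *
          n * ((4 * j + 2) * n + 4 * j + 3) := by
  have hD : ((2 * j).choose j : ℚ) ≠ 0 :=
    Nat.cast_ne_zero.mpr (Nat.choose_pos (by omega)).ne'
  have hj1 : ((j : ℚ) + 1) ≠ 0 := by positivity
  have hj2 : ((j : ℚ) + 2) ≠ 0 := by positivity
  have fcat : (catalan j : ℚ) = ((2 * j).choose j : ℚ) / ((j : ℚ) + 1) := by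
    rw [eq_div_iff hj1]
    have h2 : (j + 1) * catalan j = (2 * j).choose j := by
      rw [← Nat.centralBinom_eq_two_mul_choose]
      exact succ_mul_catalan_eq_centralBinom j
    exact_mod_cast by linarith [congrArg (fun x : ℕ => (x : ℚ)) h2]
  induction n, hn using Nat.le_induction with
  | base =>
    rw [Finset.Icc_self, Finset.sum_singleton]
    have c2 := chq j (2 * j + 2) (by omega)
    rw [show 2 * j + 2 - 1 = 2 * j + 1 from by omega] at c2
    push_cast at c2
    have c1 := chq j (2 * j + 1) (by omega)
    rw [show 2 * j + 1 - 1 = 2 * j from by omega] at c1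
    push_cast at c1
    have f2 : ((2 * j + 2).choose j : ℚ)
        = ((2 * j + 1).choose j : ℚ) * (2 * (j : ℚ) + 2) / ((j : ℚ) + 2) := by
      rw [eq_div_iff hj2]; linear_combination c2
    have f1 : ((2 * j + 1).choose j : ℚ)
        = ((2 * j).choose j : ℚ) * (2 * (j : ℚ) + 1) / ((j : ℚ) + 1) := by
      rw [eq_div_iff hj1]; linear_combination c1
    rw [show j + 1 + j + 1 = 2 * j + 2 from by ring,
        show j + 1 + j = 2 * j + 1 from by ring,
        show j + 1 - 1 = j from by omega,
        Nat.choose_succ_self_right, Nat.choose_self, fcat, f2, f1]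
    push_cast
    rw [Nat.sub_self]
    field_simp
    ring
  | succ n hn ih =>
    have hnq : (j : ℚ) < n := by exact_mod_cast hn
    have d1 : (n : ℚ) - j ≠ 0 := by linarith
    have d2 : (n : ℚ) + 1 - j ≠ 0 := by linarith
    have d3 : (n : ℚ) + 2 ≠ 0 := by positivity
    have d4 : (n : ℚ) + 1 ≠ 0 := by positivity
    -- choose relations
    have e1 : (n.choose j : ℚ) * ((n : ℚ) - j) = ((n - 1).choose j : ℚ) * n :=
      chq j n hn
    have e2 : ((n + 1).choose j : ℚ) * ((n : ℚ) + 1 - j)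
        = (n.choose j : ℚ) * ((n : ℚ) + 1) := by
      have := chq j (n + 1) (by omega)
      rw [show n + 1 - 1 = n from by omega] at this
      push_cast at this
      linear_combination this
    have e3 : ((n + j + 2).choose j : ℚ) * ((n : ℚ) + 2)
        = ((n + j + 1).choose j : ℚ) * ((n : ℚ) + j + 2) := by
      have := chq j (n + j + 2) (by omega)
      rw [show n + j + 2 - 1 = n + j + 1 from by omega] at this
      push_cast at this
      linear_combination this
    have e4n : (n + j + 1).choose (2 * j) * (2 * j).choose j
        = (n + j + 1).choose j * (n + 1).choose j := by
      have := Nat.choose_mul (n := n + j + 1) (k := 2 * j) (s := j)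
        (by omega)
      rwa [show n + j + 1 - j = n + 1 from by omega,
           show 2 * j - j = j from by omega] at this
    have e4 : ((n + j + 1).choose (2 * j) : ℚ) * ((2 * j).choose j : ℚ)
        = ((n + j + 1).choose j : ℚ) * ((n + 1).choose j : ℚ) := by
      exact_mod_cast e4n
    -- division forms
    have f1 : (n.choose j : ℚ) = ((n - 1).choose j : ℚ) * n / ((n : ℚ) - j) := by
      rw [eq_div_iff d1]; linear_combination e1
    have f3 : ((n + j + 2).choose j : ℚ)
        = ((n + j + 1).choose j : ℚ) * ((n : ℚ) + j + 2) / ((n : ℚ) + 2) := by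
      rw [eq_div_iff d3]; linear_combination e3
    have f4 : ((n + j + 1).choose (2 * j) : ℚ)
        = ((n - 1).choose j : ℚ) * ((n + j + 1).choose j : ℚ) * n * ((n : ℚ) + 1)
          / (((n : ℚ) - j) * (((n : ℚ) + 1 - j) * ((2 * j).choose j : ℚ))) := by
      rw [eq_div_iff (by exact mul_ne_zero d1 (mul_ne_zero d2 hD))]
      have h21 : ((n + 1).choose j : ℚ) * (((n : ℚ) + 1 - j) * (((n : ℚ) - j)))
          = ((n - 1).choose j : ℚ) * n * ((n : ℚ) + 1) := by
        linear_combination ((n : ℚ) - j) * e2 + ((n : ℚ) + 1) * e1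
      linear_combination ((n + j + 1).choose j : ℚ) * h21
        + (((n : ℚ) + 1 - j) * ((n : ℚ) - j)) * e4
    -- split off the top of the sum
    rw [Finset.sum_Icc_succ_top (by omega : j + 1 ≤ n + 1)]
    have hflip : ∀ k ∈ Finset.Icc (j + 1) n,
        (-1 : ℚ) ^ (n + 1 - k) * (4 * k ^ 2 + 2 * k - 1) * ((k + j).choose (2 * j) : ℚ) *
          (2 * j + 1 - j * (j + 1) * (2 * k + 1) / (k * (k + 1)))
        = -((-1 : ℚ) ^ (n - k) * (4 * k ^ 2 + 2 * k - 1) * ((k + j).choose (2 * j) : ℚ) *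
          (2 * j + 1 - j * (j + 1) * (2 * k + 1) / (k * (k + 1)))) := by
      intro k hk
      rw [Finset.mem_Icc] at hk
      rw [show n + 1 - k = (n - k) + 1 from by omega, pow_succ]
      ring
    rw [Finset.sum_congr rfl hflip, Finset.sum_neg_distrib, ih]
    rw [show n + 1 - 1 = n from by omega,
        show n + 1 + j + 1 = n + j + 2 from by omega,
        show n + 1 + j = n + j + 1 from by omega,
        show n + 1 - (n + 1) = 0 from by omega]
    rw [fcat, f1, f3, f4]
    push_cast
    field_simp
    ring
end

section
/- For any prime p > 3, ∑_{j=0}^{p−2} C(2j,j) (−2)^j ≡ 1 (mod p), ∑_{j=0}^{p−2} C(2j+1,j+1) (−2)^j ≡ 0 (mod p), and 9 ∑_{j=0}^{p−2} j C(2j,j) (−2)^j ≡ −4 (mod p). -/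
open Finset

theorem stmt16 (p : ℕ) (hp : p.Prime) (hp3 : 3 < p) :
    (∑ j ∈ Finset.range (p - 1), ((2 * j).choose j : ℤ) * (-2) ^ j ≡ 1 [ZMOD p]) ∧
    (∑ j ∈ Finset.range (p - 1), ((2 * j + 1).choose (j + 1) : ℤ) * (-2) ^ j ≡ 0 [ZMOD p]) ∧
    (9 * ∑ j ∈ Finset.range (p - 1), (j : ℤ) * ((2 * j).choose j : ℤ) * (-2) ^ j ≡ -4 [ZMOD p]) := by
  haveI : Fact p.Prime := ⟨hp⟩
  obtain ⟨m, hm2⟩ : ∃ m, p = 2 * m + 1 := by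
    obtain ⟨t, ht⟩ := hp.odd_of_ne_two (by omega)
    exact ⟨t, ht⟩
  have hm1 : 2 ≤ m := by omega
  have hchar : ((p : ℕ) : ZMod p) = 0 := ZMod.natCast_self p
  have hm0 : (2 * (m : ZMod p) + 1) = 0 := by
    have : ((2 * m + 1 : ℕ) : ZMod p) = 0 := by rw [← hm2]; exact hchar
    push_cast at this; linear_combination this
  have hnz : ∀ a : ℕ, 0 < a → a < p → ((a : ℕ) : ZMod p) ≠ 0 := by
    intro a ha hap h
    rw [ZMod.natCast_eq_zero_iff] at h
    exact absurd (Nat.le_of_dvd ha h) (by omega)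
  have h2ne : (2 : ZMod p) ≠ 0 := by exact_mod_cast hnz 2 (by norm_num) (by omega)
  have h8ne : (8 : ZMod p) ≠ 0 := by
    have : (8 : ZMod p) = 2 ^ 3 := by norm_num
    rw [this]; exact pow_ne_zero _ h2ne
  have h3ne : (3 : ZMod p) ≠ 0 := by exact_mod_cast hnz 3 (by norm_num) (by omega)
  have h9 : (9 : ZMod p) ^ m = 1 := by
    have h1 : (9 : ZMod p) = 3 ^ 2 := by norm_num
    have h2 : (3 : ZMod p) ^ (p - 1) = 1 := ZMod.pow_card_sub_one_eq_one h3ne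
    rw [h1, ← pow_mul, show 2 * m = p - 1 by omega, h2]
  -- key lemma
  have key : ∀ k, k ≤ m → (((2 * k).choose k : ℕ) : ZMod p) = (-4) ^ k * ((m.choose k : ℕ) : ZMod p) := by
    intro k
    induction k with
    | zero => simp
    | succ n ih =>
      intro hn
      have ihn := ih (by omega)
      have h1 : ((n + 1) * (2 * (n + 1)).choose (n + 1) : ℕ) = 2 * (2 * n + 1) * (2 * n).choose n := by
        have := Nat.succ_mul_centralBinom_succ n
        simpa [Nat.centralBinom, Nat.mul_succ] using this
      have h2 : (m.choose (n + 1)) * (n + 1) = m.choose n * (m - n) := Nat.choose_succ_right_eq m n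
      have hmn : ((m - n : ℕ) : ZMod p) = (m : ZMod p) - n := by
        have h : n ≤ m := by omega
        push_cast [h]; ring
      have hne : ((n + 1 : ℕ) : ZMod p) ≠ 0 := hnz (n + 1) (by omega) (by omega)
      have h1' : ((n : ZMod p) + 1) * (((2 * (n + 1)).choose (n + 1) : ℕ) : ZMod p)
          = 2 * (2 * n + 1) * (((2 * n).choose n : ℕ) : ZMod p) := by
        exact_mod_cast congrArg (Nat.cast : ℕ → ZMod p) h1
      have h2' : ((m.choose (n + 1) : ℕ) : ZMod p) * ((n : ZMod p) + 1)
          = ((m.choose n : ℕ) : ZMod p) * ((m : ZMod p) - n) := by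
        have := congrArg (Nat.cast : ℕ → ZMod p) h2
        push_cast at this
        rw [hmn] at this
        exact_mod_cast this
      apply mul_left_cancel₀ (a := ((n : ZMod p) + 1)) (by exact_mod_cast hne)
      rw [h1', ihn]
      linear_combination (4 * (-4 : ZMod p) ^ n) * h2' + (2 * (-4 : ZMod p) ^ n * ((m.choose n : ℕ) : ZMod p)) * hm0
  -- vanishing lemmas
  have hvan : ∀ j, m + 1 ≤ j → j < 2 * m → (((2 * j).choose j : ℕ) : ZMod p) = 0 := by
    intro j h1 h2
    rw [ZMod.natCast_eq_zero_iff]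
    exact hp.dvd_choose (by omega) (by omega) (by omega)
  have hvan2 : ∀ j, m ≤ j → j < 2 * m → (((2 * j + 1).choose (j + 1) : ℕ) : ZMod p) = 0 := by
    intro j h1 h2
    rw [ZMod.natCast_eq_zero_iff]
    exact hp.dvd_choose (by omega) (by omega) (by omega)
  -- binomial sums
  have hbinf : ∀ N : ℕ, ∑ j ∈ range (N + 1), ((N.choose j : ℕ) : ZMod p) * 8 ^ j = 9 ^ N := by
    intro N
    have h := add_pow (8 : ZMod p) 1 N
    rw [show (8 : ZMod p) + 1 = 9 by norm_num] at h
    rw [h]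
    apply Finset.sum_congr rfl
    intro k _
    rw [one_pow, mul_one, mul_comm]
  have h8pow : ∀ j : ℕ, ((-4 : ZMod p)) ^ j * (-2) ^ j = 8 ^ j := by
    intro j; rw [← mul_pow]; norm_num
  have hpm : p - 1 = 2 * m := by omega
  refine ⟨?_, ?_, ?_⟩
  · -- sum 1
    rw [← ZMod.intCast_eq_intCast_iff]
    push_cast
    rw [hpm]
    have e1 : ∑ j ∈ range (2 * m), (((2 * j).choose j : ℕ) : ZMod p) * (-2) ^ j
        = ∑ j ∈ range (m + 1), (((2 * j).choose j : ℕ) : ZMod p) * (-2) ^ j := by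
      refine (Finset.sum_subset (by intro x; simp; omega) ?_).symm
      intro x hx hnx
      simp only [mem_range] at hx hnx
      rw [hvan x (by omega) (by omega), zero_mul]
    rw [e1]
    have e2 : ∀ j ∈ range (m + 1), (((2 * j).choose j : ℕ) : ZMod p) * (-2) ^ j
        = ((m.choose j : ℕ) : ZMod p) * 8 ^ j := by
      intro j hj; simp only [mem_range] at hj
      rw [key j (by omega)]
      linear_combination ((m.choose j : ℕ) : ZMod p) * h8pow j
    rw [Finset.sum_congr rfl e2, hbinf m, h9]
  · -- sum 2
    rw [← ZMod.intCast_eq_intCast_iff]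
    push_cast
    rw [hpm]
    have e1 : ∑ j ∈ range (2 * m), (((2 * j + 1).choose (j + 1) : ℕ) : ZMod p) * (-2) ^ j
        = ∑ j ∈ range m, (((2 * j + 1).choose (j + 1) : ℕ) : ZMod p) * (-2) ^ j := by
      refine (Finset.sum_subset (by intro x; simp; omega) ?_).symm
      intro x hx hnx
      simp only [mem_range] at hx hnx
      rw [hvan2 x (by omega) (by omega), zero_mul]
    rw [e1]
    have e4 : ∀ j ∈ range m, (((2 * j + 1).choose (j + 1) : ℕ) : ZMod p) * (-2) ^ j
        = -2 * (((m.choose (j + 1) : ℕ) : ZMod p) * 8 ^ j) := by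
      intro j hj; simp only [mem_range] at hj
      have hnat : 2 * ((2 * j + 1).choose (j + 1)) = (2 * (j + 1)).choose (j + 1) := by
        have hs : (2 * j + 1).choose j = (2 * j + 1).choose (j + 1) := (Nat.choose_symm_half j).symm
        have : (2 * (j + 1)).choose (j + 1) = (2 * j + 1).choose j + (2 * j + 1).choose (j + 1) := by
          rw [show 2 * (j + 1) = (2 * j + 1) + 1 by ring]
          exact Nat.choose_succ_succ _ _
        omega
      have hh : (2 : ZMod p) * (((2 * j + 1).choose (j + 1) : ℕ) : ZMod p)
          = (-4) ^ (j + 1) * ((m.choose (j + 1) : ℕ) : ZMod p) := by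
        rw [← key (j + 1) (by omega), ← Nat.cast_ofNat, ← Nat.cast_mul, hnat]
      apply mul_left_cancel₀ h2ne
      rw [← mul_assoc, hh]
      linear_combination (-4 * ((m.choose (j + 1) : ℕ) : ZMod p)) * h8pow j
    rw [Finset.sum_congr rfl e4]
    have hsplit : ∑ i ∈ range (m + 1), ((m.choose i : ℕ) : ZMod p) * 8 ^ i
        = (∑ j ∈ range m, ((m.choose (j + 1) : ℕ) : ZMod p) * 8 ^ (j + 1)) + 1 := by
      rw [Finset.sum_range_succ']; simp
    apply mul_left_cancel₀ h8ne
    rw [mul_zero, Finset.mul_sum]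
    have : ∀ j ∈ range m, (8 : ZMod p) * (-2 * (((m.choose (j + 1) : ℕ) : ZMod p) * 8 ^ j))
        = -2 * (((m.choose (j + 1) : ℕ) : ZMod p) * 8 ^ (j + 1)) := by
      intro j _; ring
    rw [Finset.sum_congr rfl this, ← Finset.mul_sum]
    have h97 : ∑ j ∈ range m, ((m.choose (j + 1) : ℕ) : ZMod p) * 8 ^ (j + 1) = 0 := by
      have := hbinf m
      rw [hsplit, h9] at this
      linear_combination this
    rw [h97, mul_zero]
  · -- sum 3
    rw [← ZMod.intCast_eq_intCast_iff]
    push_cast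
    rw [hpm]
    obtain ⟨mm, hmm⟩ : ∃ mm, m = mm + 1 := ⟨m - 1, by omega⟩
    have e1 : ∑ j ∈ range (2 * m), (j : ZMod p) * (((2 * j).choose j : ℕ) : ZMod p) * (-2) ^ j
        = ∑ j ∈ range (m + 1), (j : ZMod p) * (((2 * j).choose j : ℕ) : ZMod p) * (-2) ^ j := by
      refine (Finset.sum_subset (by intro x; simp; omega) ?_).symm
      intro x hx hnx
      simp only [mem_range] at hx hnx
      rw [hvan x (by omega) (by omega), mul_zero, zero_mul]
    rw [e1]
    have e2 : ∀ j ∈ range (m + 1), (j : ZMod p) * (((2 * j).choose j : ℕ) : ZMod p) * (-2) ^ j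
        = (j : ZMod p) * ((m.choose j : ℕ) : ZMod p) * 8 ^ j := by
      intro j hj; simp only [mem_range] at hj
      rw [key j (by omega)]
      linear_combination ((j : ZMod p) * ((m.choose j : ℕ) : ZMod p)) * h8pow j
    rw [Finset.sum_congr rfl e2]
    rw [Finset.sum_range_succ']
    simp only [Nat.cast_zero, zero_mul, add_zero, pow_succ]
    have e3 : ∀ k ∈ range m, ((k + 1 : ℕ) : ZMod p) * ((m.choose (k + 1) : ℕ) : ZMod p) * (8 ^ k * 8)
        = ((m : ZMod p) * 8) * (((mm.choose k : ℕ) : ZMod p) * 8 ^ k) := by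
      intro k _
      have hnat : m * mm.choose k = m.choose (k + 1) * (k + 1) := by
        have := Nat.add_one_mul_choose_eq mm k
        rw [← hmm] at this
        exact this
      have : ((m : ℕ) : ZMod p) * ((mm.choose k : ℕ) : ZMod p)
          = ((m.choose (k + 1) : ℕ) : ZMod p) * ((k + 1 : ℕ) : ZMod p) := by
        exact_mod_cast congrArg (Nat.cast : ℕ → ZMod p) hnat
      linear_combination (-8 : ZMod p) * 8 ^ k * this
    rw [Finset.sum_congr rfl e3, ← Finset.mul_sum]
    rw [show range m = range (mm + 1) from by rw [hmm], hbinf mm]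
    have hpow9 : (9 : ZMod p) * 9 ^ mm = 9 ^ m := by rw [hmm, pow_succ]; ring
    linear_combination (8 * (m : ZMod p)) * hpow9 + (8 * (m : ZMod p)) * h9 + 4 * hm0
end

section
/- For every positive integer n, the polynomials s_{n+1}(x) − (1+2x) s_n(x) and s_n(x) − (1+2x) s_{n+1}(x) are each divisible by x^2 + x in ℤ[x]. -/
open Polynomial in
noncomputable def sPoly (n : ℕ) : Polynomial ℤ :=
  ∑ k ∈ Finset.Icc 1 n,
    Polynomial.C ((n.choose k * n.choose (k - 1) / n : ℕ) : ℤ) * X ^ (k - 1) * (X + 1) ^ (n - k)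

open Polynomial

lemma sPoly_eval_zero (n : ℕ) (hn : 0 < n) : (sPoly n).eval 0 = 1 := by
  unfold sPoly
  rw [eval_finset_sum]
  rw [Finset.sum_eq_single 1]
  · simp [Nat.choose_one_right, Nat.div_self hn]
  · intro k hk hne
    have h1 : 1 ≤ k := (Finset.mem_Icc.mp hk).1
    have : 0 < k - 1 := by omega
    simp [zero_pow (by omega : k - 1 ≠ 0)]
  · intro h
    exact absurd (Finset.mem_Icc.mpr ⟨le_refl 1, hn⟩) h

lemma sPoly_eval_neg_one (n : ℕ) (hn : 0 < n) : (sPoly n).eval (-1) = (-1) ^ (n - 1) := by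
  unfold sPoly
  rw [eval_finset_sum]
  rw [Finset.sum_eq_single n]
  · have : n.choose (n - 1) = n := by
      rw [← Nat.choose_symm (by omega : n - 1 ≤ n)]
      have h : n - (n - 1) = 1 := by omega
      simp [h]
    simp [Nat.choose_self, this, Nat.div_self hn]
  · intro k hk hne
    have h2 : k ≤ n := (Finset.mem_Icc.mp hk).2
    simp [zero_pow (by omega : n - k ≠ 0)]
  · intro h
    exact absurd (Finset.mem_Icc.mpr ⟨hn, le_refl n⟩) h

open Polynomial in
theorem stmt17 (n : ℕ) (hn : 0 < n) :
    (X ^ 2 + X : Polynomial ℤ) ∣ sPoly (n + 1) - (1 + 2 * X) * sPoly n ∧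
    (X ^ 2 + X : Polynomial ℤ) ∣ sPoly n - (1 + 2 * X) * sPoly (n + 1) := by
  have hco : IsCoprime (X : Polynomial ℤ) (X + 1) := ⟨-1, 1, by ring⟩
  have hfac : (X ^ 2 + X : Polynomial ℤ) = X * (X + 1) := by ring
  have key : ∀ p : Polynomial ℤ, p.eval 0 = 0 → p.eval (-1) = 0 →
      (X ^ 2 + X : Polynomial ℤ) ∣ p := by
    intro p h0 h1
    rw [hfac]
    refine hco.mul_dvd ?_ ?_
    · rw [X_dvd_iff, coeff_zero_eq_eval_zero, h0]
    · have : (X + 1 : Polynomial ℤ) = X - C (-1) := by simp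
      rw [this, dvd_iff_isRoot]
      exact h1
  constructor
  · apply key
    · simp [sPoly_eval_zero n hn, sPoly_eval_zero (n + 1) (by omega)]
    · simp only [eval_sub, eval_mul, eval_add, eval_one, eval_ofNat, eval_X,
        sPoly_eval_neg_one n hn, sPoly_eval_neg_one (n + 1) (by omega)]
      have : n + 1 - 1 = (n - 1) + 1 := by omega
      rw [this, pow_succ]
      ring
  · apply key
    · simp [sPoly_eval_zero n hn, sPoly_eval_zero (n + 1) (by omega)]
    · simp only [eval_sub, eval_mul, eval_add, eval_one, eval_ofNat, eval_X,
        sPoly_eval_neg_one n hn, sPoly_eval_neg_one (n + 1) (by omega)]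
      have : n + 1 - 1 = (n - 1) + 1 := by omega
      rw [this, pow_succ]
      ring
end

section
/- For every even positive integer n, the polynomial (1+2x)(n+2) s_{n+1}(x)^2 + s_n(x) s_{n+1}(x) is divisible by (1+2x)^3 in ℤ[x]. -/
namespace Stmt18Aux
open Polynomial Finset

/-- Integer Narayana number. -/
def Nar (n k : ℕ) : ℤ := ((n.choose k * n.choose (k - 1) / n : ℕ) : ℤ)

noncomputable def U : Polynomial ℤ := 1 + 2 * X

lemma nar_dvd (n k : ℕ) (hk : 1 ≤ k) : n ∣ n.choose k * n.choose (k - 1) := by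
  rcases le_or_gt k n with hkn | hkn
  · have hn1 : 1 ≤ n := le_trans hk hkn
    -- k * C(n,k) = n * C(n-1,k-1)
    have h1 : n.choose k * k = n * (n - 1).choose (k - 1) := by
      have := Nat.add_one_mul_choose_eq (n - 1) (k - 1)
      simp only [Nat.succ_eq_add_one, Nat.sub_add_cancel hn1, Nat.sub_add_cancel hk] at this
      omega
    -- (n+1-k) * C(n,k-1) = n * C(n-1,k-1)
    have h2 : n.choose (k - 1) * (n + 1 - k) = n * (n - 1).choose (k - 1) := by
      have h3 := Nat.choose_succ_right_eq n (k - 1)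
      rw [Nat.sub_add_cancel hk] at h3
      have h4 : n - (k - 1) = n + 1 - k := by omega
      rw [h4] at h3
      omega
    have hd1 : n ∣ k * (n.choose k * n.choose (k - 1)) :=
      ⟨(n - 1).choose (k - 1) * n.choose (k - 1), by rw [← mul_assoc, mul_comm k, h1, mul_assoc]⟩
    have hd2 : n ∣ (n + 1 - k) * (n.choose k * n.choose (k - 1)) :=
      ⟨(n - 1).choose (k - 1) * n.choose k, by
        rw [mul_comm (n.choose k), ← mul_assoc, mul_comm (n + 1 - k), h2, mul_assoc]⟩
    have hsum : k + (n + 1 - k) = n + 1 := by omega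
    have hd3 : n ∣ (n + 1) * (n.choose k * n.choose (k - 1)) := by
      rw [← hsum, add_mul]; exact dvd_add hd1 hd2
    have hd4 : n ∣ n * (n.choose k * n.choose (k - 1)) := dvd_mul_right _ _
    have := Nat.dvd_sub hd3 hd4
    simpa [add_mul, one_mul, Nat.add_sub_cancel_left] using this
  · simp [Nat.choose_eq_zero_of_lt hkn]

lemma nar_mul (n k : ℕ) (hn : 0 < n) (hk : 1 ≤ k) :
    Nar n k * n = (n.choose k : ℤ) * (n.choose (k - 1) : ℤ) := by
  have h := nar_dvd n k hk
  have : (n.choose k * n.choose (k - 1) / n) * n = n.choose k * n.choose (k - 1) :=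
    Nat.div_mul_cancel h
  unfold Nar
  exact_mod_cast congrArg (fun m : ℕ => (m : ℤ)) this

lemma nar_zero (n : ℕ) (hn : 2 ≤ n) : Nar n 0 = 0 := by
  unfold Nar
  simp [Nat.choose_zero_right, Nat.div_eq_of_lt hn]

lemma nar_top (n : ℕ) : Nar n (n + 1) = 0 := by
  unfold Nar
  simp [Nat.choose_eq_zero_of_lt (Nat.lt_succ_self n)]

lemma nar_one (n : ℕ) (hn : 1 ≤ n) : Nar n 1 = 1 := by
  unfold Nar
  simp [Nat.choose_one_right, Nat.div_self (by omega : 0 < n)]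

lemma nar_n (n : ℕ) (hn : 1 ≤ n) : Nar n n = 1 := by
  unfold Nar
  have h : n.choose (n - 1) = n := by
    have h2 := Nat.choose_symm (show n - 1 ≤ n by omega)
    rw [show n - (n - 1) = 1 by omega] at h2
    rw [← h2, Nat.choose_one_right]
  rw [Nat.choose_self, one_mul, h, Nat.div_self (by omega : 0 < n)]
  simp

lemma nar_symm (n k : ℕ) (hk : 1 ≤ k) (hkn : k ≤ n) : Nar n (n + 1 - k) = Nar n k := by
  unfold Nar
  have h1 : n.choose (n + 1 - k) = n.choose (k - 1) := by
    rw [show n + 1 - k = n - (k - 1) by omega, Nat.choose_symm (by omega)]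
  have h2 : n.choose (n + 1 - k - 1) = n.choose k := by
    rw [show n + 1 - k - 1 = n - k by omega, Nat.choose_symm hkn]
  rw [h1, h2, mul_comm]


lemma expand_plus {R : Type*} [CommRing R] (v : R) (m : ℕ) :
    ∃ p : R, (v + 1) ^ m = 1 + (m : R) * v + (m.choose 2 : R) * v ^ 2 + v ^ 3 * p := by
  induction m with
  | zero => exact ⟨0, by simp⟩
  | succ m ih =>
    obtain ⟨p, hp⟩ := ih
    refine ⟨(m.choose 2 : R) + p * (v + 1), ?_⟩
    have hc : ((m + 1).choose 2 : R) = (m.choose 2 : R) + (m : R) := by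
      have : (m + 1).choose 2 = m.choose 1 + m.choose 2 := Nat.choose_succ_succ m 1
      rw [this, Nat.choose_one_right]
      push_cast; ring
    rw [pow_succ, hp, hc]
    push_cast
    ring

lemma expand_minus {R : Type*} [CommRing R] (v : R) (m : ℕ) :
    ∃ p : R, (v - 1) ^ m
      = (-1) ^ m * (1 - (m : R) * v + (m.choose 2 : R) * v ^ 2) + v ^ 3 * p := by
  induction m with
  | zero => exact ⟨0, by simp⟩
  | succ m ih =>
    obtain ⟨p, hp⟩ := ih
    refine ⟨(-1) ^ m * (m.choose 2 : R) + p * (v - 1), ?_⟩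
    have hc : ((m + 1).choose 2 : R) = (m.choose 2 : R) + (m : R) := by
      have : (m + 1).choose 2 = m.choose 1 + m.choose 2 := Nat.choose_succ_succ m 1
      rw [this, Nat.choose_one_right]
      push_cast; ring
    rw [pow_succ, hp, hc, pow_succ]
    push_cast
    ring

/-- sign -/
def sg (k : ℕ) : ℤ := (-1) ^ (k - 1)

/-- linear coefficient -/
def dd (n k : ℕ) : ℤ := ((n - k : ℕ) : ℤ) - ((k - 1 : ℕ) : ℤ)

/-- quadratic coefficient -/
def ee (n k : ℕ) : ℤ :=
  ((k - 1).choose 2 : ℤ) + ((n - k).choose 2 : ℤ) - ((k - 1 : ℕ) : ℤ) * ((n - k : ℕ) : ℤ)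

def SA (n : ℕ) : ℤ := ∑ k ∈ Icc 1 n, sg k * Nar n k
def SB (n : ℕ) : ℤ := ∑ k ∈ Icc 1 n, sg k * dd n k * Nar n k
def SC (n : ℕ) : ℤ := ∑ k ∈ Icc 1 n, sg k * ee n k * Nar n k

lemma term_expand (n k : ℕ) (hk1 : 1 ≤ k) (hkn : k ≤ n) :
    U ^ 3 ∣ 2 ^ (n - 1) * (C (Nar n k) * X ^ (k - 1) * (X + 1) ^ (n - k))
      - (C (sg k * Nar n k) + C (sg k * dd n k * Nar n k) * U
          + C (sg k * ee n k * Nar n k) * U ^ 2) := by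
  have hU1 : (U - 1 : Polynomial ℤ) = 2 * X := by unfold U; ring
  have hU2 : (U + 1 : Polynomial ℤ) = 2 * (X + 1) := by unfold U; ring
  have hsum : (k - 1) + (n - k) = n - 1 := by omega
  have key : (2 : Polynomial ℤ) ^ (n - 1) * (C (Nar n k) * X ^ (k - 1) * (X + 1) ^ (n - k))
      = C (Nar n k) * ((U - 1) ^ (k - 1) * (U + 1) ^ (n - k)) := by
    rw [hU1, hU2, mul_pow, mul_pow, ← hsum, pow_add]
    ring
  rw [key]
  obtain ⟨p, hp⟩ := expand_minus U (k - 1)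
  obtain ⟨q, hq⟩ := expand_plus U (n - k)
  rw [hp, hq]
  simp only [sg, dd, ee, map_mul, map_sub, map_add, map_pow, map_neg, map_one, map_natCast]
  refine ⟨C (Nar n k) * ((-1) ^ (k - 1) * (((k - 1).choose 2 : Polynomial ℤ) * ((n - k : ℕ) : Polynomial ℤ)
      - ((k - 1 : ℕ) : Polynomial ℤ) * ((n - k).choose 2 : Polynomial ℤ)
      + ((k - 1).choose 2 : Polynomial ℤ) * ((n - k).choose 2 : Polynomial ℤ) * U)
    + (-1) ^ (k - 1) * (1 - ((k - 1 : ℕ) : Polynomial ℤ) * U + ((k - 1).choose 2 : Polynomial ℤ) * U ^ 2) * q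
    + p * (1 + ((n - k : ℕ) : Polynomial ℤ) * U + ((n - k).choose 2 : Polynomial ℤ) * U ^ 2)
    + p * U ^ 3 * q), ?_⟩
  ring


lemma key_expand (n : ℕ) (hn : 1 ≤ n) :
    U ^ 3 ∣ 2 ^ (n - 1) * sPoly n - (C (SA n) + C (SB n) * U + C (SC n) * U ^ 2) := by
  have hrw : 2 ^ (n - 1) * sPoly n - (C (SA n) + C (SB n) * U + C (SC n) * U ^ 2)
      = ∑ k ∈ Icc 1 n,
          (2 ^ (n - 1) * (C (Nar n k) * X ^ (k - 1) * (X + 1) ^ (n - k))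
            - (C (sg k * Nar n k) + C (sg k * dd n k * Nar n k) * U
                + C (sg k * ee n k * Nar n k) * U ^ 2)) := by
    rw [Finset.sum_sub_distrib]
    congr 1
    · rw [sPoly, Finset.mul_sum]
      rfl
    · rw [SA, SB, SC, map_sum, map_sum, map_sum, Finset.sum_mul, Finset.sum_mul,
        ← Finset.sum_add_distrib, ← Finset.sum_add_distrib]
  rw [hrw]
  apply Finset.dvd_sum
  intro k hk
  rw [Finset.mem_Icc] at hk
  exact term_expand n k hk.1 hk.2


lemma sg_flip_even (n k : ℕ) (hn : Even n) (hk1 : 1 ≤ k) (hkn : k ≤ n) :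
    sg (n + 1 - k) = - sg k := by
  unfold sg
  have h1 : n + 1 - k - 1 = n - k := by omega
  rw [h1]
  rcases Nat.even_or_odd k with hke | hko
  · have h2 : Even (n - k) := by
      rw [Nat.even_iff] at hn hke; rw [Nat.even_iff]; omega
    have h3 : Odd (k - 1) := by rw [Nat.even_iff] at hke; rw [Nat.odd_iff]; omega
    simp [h2.neg_one_pow, h3.neg_one_pow]
  · have h2 : Odd (n - k) := by
      rw [Nat.even_iff] at hn; rw [Nat.odd_iff] at hko; rw [Nat.odd_iff]; omega
    have h3 : Even (k - 1) := by rw [Nat.odd_iff] at hko; rw [Nat.even_iff]; omega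
    simp [h2.neg_one_pow, h3.neg_one_pow]

lemma SA_zero (n : ℕ) (hn : Even n) (hn1 : 1 ≤ n) : SA n = 0 := by
  unfold SA
  apply Finset.sum_involution (fun k _ => n + 1 - k)
  · intro k hk
    rw [Finset.mem_Icc] at hk
    rw [nar_symm n k hk.1 hk.2, sg_flip_even n k hn hk.1 hk.2]
    ring
  · intro k hk hfk
    rw [Finset.mem_Icc] at hk
    intro hfix
    rw [Nat.even_iff] at hn
    omega
  · intro k hk
    rw [Finset.mem_Icc] at hk ⊢
    omega
  · intro k hk
    rw [Finset.mem_Icc] at hk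
    omega

lemma SC_zero (n : ℕ) (hn : Even n) (hn1 : 1 ≤ n) : SC n = 0 := by
  unfold SC
  apply Finset.sum_involution (fun k _ => n + 1 - k)
  · intro k hk
    rw [Finset.mem_Icc] at hk
    have hee : ee n (n + 1 - k) = ee n k := by
      unfold ee
      rw [show n + 1 - k - 1 = n - k by omega, show n - (n + 1 - k) = k - 1 by omega]
      ring
    rw [nar_symm n k hk.1 hk.2, sg_flip_even n k hn hk.1 hk.2, hee]
    ring
  · intro k hk hfk
    rw [Finset.mem_Icc] at hk
    intro hfix
    rw [Nat.even_iff] at hn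
    omega
  · intro k hk
    rw [Finset.mem_Icc] at hk ⊢
    omega
  · intro k hk
    rw [Finset.mem_Icc] at hk
    omega

lemma SB_succ_zero (n : ℕ) (hn : Even n) (hn1 : 1 ≤ n) : SB (n + 1) = 0 := by
  unfold SB
  apply Finset.sum_involution (fun k _ => n + 2 - k)
  · intro k hk
    rw [Finset.mem_Icc] at hk
    have hsg : sg (n + 2 - k) = sg k := by
      unfold sg
      rw [show n + 2 - k - 1 = n + 1 - k by omega]
      rcases Nat.even_or_odd k with hke | hko
      · have h2 : Odd (n + 1 - k) := by
          rw [Nat.even_iff] at hn hke; rw [Nat.odd_iff]; omega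
        have h3 : Odd (k - 1) := by rw [Nat.even_iff] at hke; rw [Nat.odd_iff]; omega
        rw [h2.neg_one_pow, h3.neg_one_pow]
      · have h2 : Even (n + 1 - k) := by
          rw [Nat.even_iff] at hn; rw [Nat.odd_iff] at hko; rw [Nat.even_iff]; omega
        have h3 : Even (k - 1) := by rw [Nat.odd_iff] at hko; rw [Nat.even_iff]; omega
        rw [h2.neg_one_pow, h3.neg_one_pow]

    have hdd : dd (n + 1) (n + 2 - k) = - dd (n + 1) k := by
      unfold dd
      rw [show n + 1 - (n + 2 - k) = k - 1 by omega, show n + 2 - k - 1 = n + 1 - k by omega]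
      ring
    have hsymm : Nar (n + 1) (n + 2 - k) = Nar (n + 1) k := by
      have := nar_symm (n + 1) k hk.1 hk.2
      rw [show n + 1 + 1 - k = n + 2 - k by omega] at this
      exact this
    rw [hsymm, hsg, hdd]
    ring
  · intro k hk hfk
    rw [Finset.mem_Icc] at hk
    intro hfix
    -- fixed point: 2k = n+2, then dd = 0 so term = 0
    apply hfk
    have h2k : 2 * k = n + 2 := by omega
    have : dd (n + 1) k = 0 := by
      unfold dd
      rw [show n + 1 - k = k - 1 by omega]
      ring
    rw [this]
    ring
  · intro k hk
    rw [Finset.mem_Icc] at hk ⊢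
    omega
  · intro k hk
    rw [Finset.mem_Icc] at hk
    omega


/-- Key binomial identity (main case 2 ≤ k ≤ n). -/
lemma core_main (n k : ℕ) (hn : 2 ≤ n) (hk2 : 2 ≤ k) (hkn : k ≤ n) :
    ((n : ℤ) + 2) * Nar (n + 1) k + 2 * dd n k * Nar n k
      = (3 * (n : ℤ) - 2 * (k : ℤ) + 4) * Nar n (k - 1)
        + (3 * (n : ℤ) - 2 * (k : ℤ) + 2) * Nar n k := by
  have hn0 : (0:ℤ) < (n:ℤ) := by exact_mod_cast (by omega : 0 < n)
  have hn1 : (0:ℤ) < (n:ℤ) + 1 := by linarith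
  -- cancel the factor n*(n+1)
  have hcancel : ∀ x y : ℤ, x * ((n:ℤ) * ((n:ℤ)+1)) = y * ((n:ℤ) * ((n:ℤ)+1)) → x = y := by
    intro x y h
    exact mul_right_cancel₀ (by positivity) h
  apply hcancel
  -- abbreviations
  set a : ℤ := (n.choose (k - 2) : ℤ) with ha
  set b : ℤ := (n.choose (k - 1) : ℤ) with hb
  set c : ℤ := (n.choose k : ℤ) with hc
  -- Narayana relations
  have hNk : Nar n k * (n:ℤ) = c * b := nar_mul n k (by omega) (by omega)
  have hNk1 : Nar n (k - 1) * (n:ℤ) = b * a := by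
    have := nar_mul n (k - 1) (by omega) (by omega)
    rw [show k - 1 - 1 = k - 2 by omega] at this
    exact this
  have hN1 : Nar (n + 1) k * ((n:ℤ) + 1) = ((n+1).choose k : ℤ) * ((n+1).choose (k-1) : ℤ) := by
    have := nar_mul (n + 1) k (by omega) (by omega)
    exact_mod_cast this
  -- Pascal
  have hp1 : ((n+1).choose k : ℤ) = c + b := by
    have h := Nat.choose_succ_succ n (k - 1)
    simp only [Nat.succ_eq_add_one, show k - 1 + 1 = k by omega] at h
    rw [hc, hb, h]
    push_cast
    ring
  have hp2 : ((n+1).choose (k-1) : ℤ) = b + a := by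
    have h := Nat.choose_succ_succ n (k - 2)
    simp only [Nat.succ_eq_add_one, show k - 2 + 1 = k - 1 by omega] at h
    rw [hb, ha, h]
    push_cast
    ring
  -- dd value
  have hdd : dd n k = (n:ℤ) + 1 - 2 * (k:ℤ) := by
    unfold dd
    rw [Nat.cast_sub (by omega : k ≤ n), Nat.cast_sub (by omega : 1 ≤ k)]
    push_cast
    ring
  -- choose recurrences
  have hrb : ((k:ℤ) - 1) * b = ((n:ℤ) - (k:ℤ) + 2) * a := by
    have h := Nat.choose_succ_right_eq n (k - 2)
    rw [show k - 2 + 1 = k - 1 by omega] at h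
    have h' : (n.choose (k-1) : ℤ) * ((k:ℤ) - 1) = (n.choose (k-2) : ℤ) * ((n:ℤ) - (k:ℤ) + 2) := by
      have hcast : ((n - (k - 2) : ℕ) : ℤ) = (n:ℤ) - (k:ℤ) + 2 := by
        rw [Nat.cast_sub (by omega : k - 2 ≤ n)]
        push_cast [show ((k - 2 : ℕ) : ℤ) = (k:ℤ) - 2 by
          rw [Nat.cast_sub (by omega : 2 ≤ k)]; push_cast; ring]
        ring
      have hcast2 : ((k - 1 : ℕ) : ℤ) = (k:ℤ) - 1 := by
        rw [Nat.cast_sub (by omega : 1 ≤ k)]; push_cast; ring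
      calc (n.choose (k-1) : ℤ) * ((k:ℤ) - 1) = ((n.choose (k-1) * (k-1) : ℕ) : ℤ) := by
            push_cast [hcast2]; ring
        _ = ((n.choose (k-2) * (n - (k-2)) : ℕ) : ℤ) := by rw [h]
        _ = (n.choose (k-2) : ℤ) * ((n:ℤ) - (k:ℤ) + 2) := by push_cast [hcast]; ring
    rw [hb, ha]
    linarith [h']
  have hrc : (k:ℤ) * c = ((n:ℤ) - (k:ℤ) + 1) * b := by
    have h := Nat.choose_succ_right_eq n (k - 1)
    rw [show k - 1 + 1 = k by omega] at h
    have hcast : ((n - (k - 1) : ℕ) : ℤ) = (n:ℤ) - (k:ℤ) + 1 := by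
      rw [Nat.cast_sub (by omega : k - 1 ≤ n)]
      push_cast [show ((k - 1 : ℕ) : ℤ) = (k:ℤ) - 1 by
        rw [Nat.cast_sub (by omega : 1 ≤ k)]; push_cast; ring]
      ring
    have h' : (n.choose k : ℤ) * (k:ℤ) = (n.choose (k-1) : ℤ) * ((n:ℤ) - (k:ℤ) + 1) := by
      calc (n.choose k : ℤ) * (k:ℤ) = ((n.choose k * k : ℕ) : ℤ) := by push_cast; ring
        _ = ((n.choose (k-1) * (n - (k-1)) : ℕ) : ℤ) := by rw [h]
        _ = (n.choose (k-1) : ℤ) * ((n:ℤ) - (k:ℤ) + 1) := by push_cast [hcast]; ring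
    rw [hc, hb]
    linarith [h']
  -- reduce to polynomial identity over ℚ
  have main : (n:ℤ) * ((n:ℤ)+2) * ((c + b) * (b + a))
      + 2 * ((n:ℤ) + 1 - 2*(k:ℤ)) * ((n:ℤ)+1) * (c * b)
      = (3*(n:ℤ) - 2*(k:ℤ) + 4) * ((n:ℤ)+1) * (b * a)
        + (3*(n:ℤ) - 2*(k:ℤ) + 2) * ((n:ℤ)+1) * (c * b) := by
    have hK0 : ((k:ℚ)) ≠ 0 := by
      have : (0:ℚ) < (k:ℚ) := by exact_mod_cast (by omega : 0 < k)
      exact this.ne'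
    have hK1 : ((k:ℚ)) - 1 ≠ 0 := by
      have : (1:ℚ) < (k:ℚ) := by exact_mod_cast (by omega : 1 < k)
      intro h; linarith
    have hrbQ : ((k:ℚ) - 1) * (b:ℚ) = ((n:ℚ) - (k:ℚ) + 2) * (a:ℚ) := by exact_mod_cast hrb
    have hrcQ : ((k:ℚ)) * (c:ℚ) = ((n:ℚ) - (k:ℚ) + 1) * (b:ℚ) := by exact_mod_cast hrc
    have hbq : (b:ℚ) = ((n:ℚ) - (k:ℚ) + 2) * (a:ℚ) / ((k:ℚ) - 1) := by
      field_simp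
      linarith [hrbQ]
    have hcq : (c:ℚ) = ((n:ℚ) - (k:ℚ) + 1) * (b:ℚ) / ((k:ℚ)) := by
      field_simp
      linarith [hrcQ]
    have hQ : (n:ℚ) * ((n:ℚ)+2) * (((c:ℚ) + (b:ℚ)) * ((b:ℚ) + (a:ℚ)))
        + 2 * ((n:ℚ) + 1 - 2*(k:ℚ)) * ((n:ℚ)+1) * ((c:ℚ) * (b:ℚ))
        = (3*(n:ℚ) - 2*(k:ℚ) + 4) * ((n:ℚ)+1) * ((b:ℚ) * (a:ℚ))
          + (3*(n:ℚ) - 2*(k:ℚ) + 2) * ((n:ℚ)+1) * ((c:ℚ) * (b:ℚ)) := by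
      rw [hcq, hbq]
      field_simp
      ring
    exact_mod_cast hQ
  -- assemble
  calc (((n : ℤ) + 2) * Nar (n + 1) k + 2 * dd n k * Nar n k) * ((n:ℤ) * ((n:ℤ)+1))
      = ((n:ℤ)+2) * (n:ℤ) * (Nar (n+1) k * ((n:ℤ)+1))
        + 2 * dd n k * ((n:ℤ)+1) * (Nar n k * (n:ℤ)) := by ring
    _ = (n:ℤ) * ((n:ℤ)+2) * ((c + b) * (b + a))
        + 2 * ((n:ℤ) + 1 - 2*(k:ℤ)) * ((n:ℤ)+1) * (c * b) := by
        rw [hN1, hp1, hp2, hNk, hdd]; ring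
    _ = (3*(n:ℤ) - 2*(k:ℤ) + 4) * ((n:ℤ)+1) * (b * a)
        + (3*(n:ℤ) - 2*(k:ℤ) + 2) * ((n:ℤ)+1) * (c * b) := main
    _ = ((3 * (n : ℤ) - 2 * (k : ℤ) + 4) * Nar n (k - 1)
        + (3 * (n : ℤ) - 2 * (k : ℤ) + 2) * Nar n k) * ((n:ℤ) * ((n:ℤ)+1)) := by
        rw [show ((3 * (n : ℤ) - 2 * (k : ℤ) + 4) * Nar n (k - 1)
            + (3 * (n : ℤ) - 2 * (k : ℤ) + 2) * Nar n k) * ((n:ℤ) * ((n:ℤ)+1))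
          = (3*(n:ℤ) - 2*(k:ℤ) + 4) * ((n:ℤ)+1) * (Nar n (k-1) * (n:ℤ))
            + (3*(n:ℤ) - 2*(k:ℤ) + 2) * ((n:ℤ)+1) * (Nar n k * (n:ℤ)) by ring,
          hNk1, hNk]


lemma core (n k : ℕ) (hn : 2 ≤ n) (hk1 : 1 ≤ k) (hk : k ≤ n + 1) :
    ((n : ℤ) + 2) * Nar (n + 1) k + 2 * dd n k * Nar n k
      = (3 * (n : ℤ) - 2 * (k : ℤ) + 4) * Nar n (k - 1)
        + (3 * (n : ℤ) - 2 * (k : ℤ) + 2) * Nar n k := by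
  rcases eq_or_lt_of_le hk1 with hk1' | hk2
  · -- k = 1
    rw [← hk1']
    have h1 : Nar (n + 1) 1 = 1 := nar_one (n + 1) (by omega)
    have h2 : Nar n 1 = 1 := nar_one n (by omega)
    have h3 : Nar n (1 - 1) = 0 := nar_zero n hn
    have h4 : dd n 1 = (n : ℤ) - 1 := by
      unfold dd
      rw [Nat.cast_sub (by omega : 1 ≤ n)]
      simp
    rw [h1, h2, h3, h4]
    push_cast
    ring
  · rcases Nat.lt_or_ge k (n + 1) with hkn | hkn
    · exact core_main n k hn (by omega) (by omega)
    · -- k = n + 1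
      have hk' : k = n + 1 := by omega
      subst hk'
      have h1 : Nar (n + 1) (n + 1) = 1 := nar_n (n + 1) (by omega)
      have h2 : Nar n (n + 1) = 0 := nar_top n
      have h3 : Nar n (n + 1 - 1) = 1 := by
        rw [Nat.add_sub_cancel]; exact nar_n n (by omega)
      rw [h1, h2, h3]
      push_cast
      ring

lemma telescope (F : ℕ → ℤ) (m : ℕ) :
    ∑ k ∈ Icc 1 m, (F k - F (k + 1)) = F 1 - F (m + 1) := by
  induction m with
  | zero => simp
  | succ m ih =>
    rw [Finset.sum_Icc_succ_top (by omega : 1 ≤ m + 1), ih]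
    ring

lemma SAB (n : ℕ) (hn : 2 ≤ n) (he : Even n) :
    ((n : ℤ) + 2) * SA (n + 1) + 2 * SB n = 0 := by
  -- extend SB n to Icc 1 (n+1)
  have hSB : SB n = ∑ k ∈ Icc 1 (n + 1), sg k * dd n k * Nar n k := by
    rw [SB, Finset.sum_Icc_succ_top (by omega : (1:ℕ) ≤ n + 1), nar_top n]
    ring
  have hcomb : ((n : ℤ) + 2) * SA (n + 1) + 2 * SB n
      = ∑ k ∈ Icc 1 (n + 1),
          (sg k * (((n : ℤ) + 2) * Nar (n + 1) k + 2 * dd n k * Nar n k)) := by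
    rw [hSB, SA, Finset.mul_sum, Finset.mul_sum, ← Finset.sum_add_distrib]
    congr 1
    funext k
    ring
  rw [hcomb]
  set F : ℕ → ℤ := fun j => sg j * ((3 * (n:ℤ) - 2 * (j:ℤ) + 4) * Nar n (j - 1)) with hF
  have hterm : ∀ k ∈ Icc 1 (n + 1),
      sg k * (((n : ℤ) + 2) * Nar (n + 1) k + 2 * dd n k * Nar n k)
      = F k - F (k + 1) := by
    intro k hk
    rw [Finset.mem_Icc] at hk
    have hsgsucc : sg (k + 1) = - sg k := by
      unfold sg
      have h := pow_succ (-1 : ℤ) (k - 1)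
      rw [show k - 1 + 1 = k by omega] at h
      rw [Nat.add_sub_cancel, h]
      ring
    rw [hF]
    simp only
    rw [hsgsucc, core n k hn hk.1 hk.2, Nat.add_sub_cancel]
    push_cast
    ring
  rw [Finset.sum_congr rfl hterm, telescope]
  have h1 : F 1 = 0 := by
    rw [hF]; simp only
    rw [show (1:ℕ) - 1 = 0 from rfl, nar_zero n hn]
    ring
  have h2 : F (n + 1 + 1) = 0 := by
    rw [hF]; simp only
    rw [show n + 1 + 1 - 1 = n + 1 by omega, nar_top n]
    ring
  rw [h1, h2]
  ring


lemma dvd_of_two_mul (p : Polynomial ℤ) (h : U ^ 3 ∣ 2 * p) : U ^ 3 ∣ p := by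
  have key : p = U ^ 3 * p - (3 * X + 6 * X ^ 2 + 4 * X ^ 3) * (2 * p) := by
    rw [show (U : Polynomial ℤ) = 1 + 2 * X from rfl]
    ring
  rw [key]
  exact dvd_sub (dvd_mul_right _ _) (h.mul_left _)

lemma dvd_of_two_pow_mul (m : ℕ) (p : Polynomial ℤ) (h : U ^ 3 ∣ 2 ^ m * p) : U ^ 3 ∣ p := by
  induction m with
  | zero => simpa using h
  | succ m ih =>
    apply ih
    apply dvd_of_two_mul
    rw [show (2 : Polynomial ℤ) * (2 ^ m * p) = 2 ^ (m + 1) * p by ring]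
    exact h

end Stmt18Aux

open Polynomial in
theorem stmt18 (n : ℕ) (hn : 0 < n) (he : Even n) :
    ((1 + 2 * X) ^ 3 : Polynomial ℤ) ∣
      (1 + 2 * X) * (n + 2 : ℤ) • sPoly (n + 1) ^ 2 + sPoly n * sPoly (n + 1) := by
  open Stmt18Aux in
  have hn2 : 2 ≤ n := by
    rcases he with ⟨r, hr⟩
    omega
  -- expansions
  obtain ⟨ρ, hρ⟩ := Stmt18Aux.key_expand n (by omega)
  obtain ⟨σ, hσ⟩ := Stmt18Aux.key_expand (n + 1) (by omega)
  rw [Nat.add_sub_cancel] at hσ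
  have e0 : 2 ^ (n - 1) * sPoly n
      = C (Stmt18Aux.SA n) + C (Stmt18Aux.SB n) * Stmt18Aux.U
        + C (Stmt18Aux.SC n) * Stmt18Aux.U ^ 2 + Stmt18Aux.U ^ 3 * ρ := by
    linear_combination hρ
  have e1 : 2 ^ n * sPoly (n + 1)
      = C (Stmt18Aux.SA (n + 1)) + C (Stmt18Aux.SB (n + 1)) * Stmt18Aux.U
        + C (Stmt18Aux.SC (n + 1)) * Stmt18Aux.U ^ 2 + Stmt18Aux.U ^ 3 * σ := by
    linear_combination hσ
  -- vanishing identities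
  rw [Stmt18Aux.SA_zero n he (by omega), Stmt18Aux.SC_zero n he (by omega), map_zero] at e0
  rw [Stmt18Aux.SB_succ_zero n he (by omega), map_zero] at e1
  have hIV : ((n : ℤ) + 2) * Stmt18Aux.SA (n + 1) + 2 * Stmt18Aux.SB n = 0 :=
    Stmt18Aux.SAB n hn2 he
  have hC4 : C ((n : ℤ) + 2) * C (Stmt18Aux.SA (n + 1)) + 2 * C (Stmt18Aux.SB n)
      = (0 : Polynomial ℤ) := by
    rw [show (2 : Polynomial ℤ) = C 2 from (map_ofNat C 2).symm, ← C_mul, ← C_mul, ← C_add,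
      hIV, map_zero]
  -- divisibility of Q
  have hQ : Stmt18Aux.U ^ 3 ∣ C ((n : ℤ) + 2) * Stmt18Aux.U * sPoly (n + 1) + sPoly n := by
    apply Stmt18Aux.dvd_of_two_pow_mul n
    refine ⟨C ((n : ℤ) + 2) * C (Stmt18Aux.SC (n + 1)) + C ((n : ℤ) + 2) * Stmt18Aux.U * σ
      + 2 * ρ, ?_⟩
    have hpow : (2 : Polynomial ℤ) ^ n = 2 * 2 ^ (n - 1) := by
      rw [← pow_succ']
      congr 1
      omega
    calc 2 ^ n * (C ((n : ℤ) + 2) * Stmt18Aux.U * sPoly (n + 1) + sPoly n)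
        = C ((n : ℤ) + 2) * Stmt18Aux.U * (2 ^ n * sPoly (n + 1))
          + 2 * (2 ^ (n - 1) * sPoly n) := by rw [hpow]; ring
      _ = _ := by
          rw [e0, e1]
          linear_combination Stmt18Aux.U * hC4
  have hgoal : (1 + 2 * X) * (n + 2 : ℤ) • sPoly (n + 1) ^ 2 + sPoly n * sPoly (n + 1)
      = sPoly (n + 1) * (C ((n : ℤ) + 2) * Stmt18Aux.U * sPoly (n + 1) + sPoly n) := by
    rw [zsmul_eq_mul, show Stmt18Aux.U = 1 + 2 * X from rfl, ← C_eq_intCast]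
    push_cast
    ring
  rw [hgoal, show ((1 + 2 * X) ^ 3 : Polynomial ℤ) = Stmt18Aux.U ^ 3 from rfl]
  exact hQ.mul_left _
end
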